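/- Let f : ℝ^d → ℝ be twice continuously differentiable with ∇²f(w) ⪯ L·I for all w (0 < L < ∞), and bounded below by f_min. Let (H̃_k)_{k≥0} be symmetric d×d matrices with μ̃·I ⪯ H̃_k ⪯ L̃·I for all k, where 0 < μ̃ and L ≤ L̃ < ∞. Let w₀ ∈ ℝ^d and define w_{k+1} = w_k − α H̃_k⁻¹ g_k with 0 < α ≤ μ̃/L, where each g_k satisfies ‖g_k − ∇f(w_k)‖²_{H̃_k⁻¹} ≤ θ̃_g² ‖∇f(w_k)‖²_{H̃_k⁻¹} + ι_k with θ̃_g ∈ [0,1) and ∑_{k=0}^∞ ι_k = ι̃ < ∞. Then lim_{k→∞} ‖∇f(w_k)‖² = 0, and for every positive integer T: min_{0 ≤ k ≤ T−1} ‖∇f(w_k)‖² ≤ (L̃/((1 − θ̃_g²) T)) · ( 2(f(w₀) − f_min)/α + ι̃ ). -/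

import Mathlib

open Finset Matrix Filter
open scoped RealInnerProductSpace

noncomputable section

abbrev Vec (d : ℕ) := EuclideanSpace ℝ (Fin d)

/-- The continuous linear operator on Euclidean space associated with a matrix. -/
noncomputable def toOp {d : ℕ} (A : Matrix (Fin d) (Fin d) ℝ) : Vec d →L[ℝ] Vec d :=
  LinearMap.toContinuousLinearMap (Matrix.toEuclideanLin A)

lemma descent_lemma {d : ℕ} {L : ℝ} {f : Vec d → ℝ} {gradf : Vec d → Vec d}
    {Hf : Vec d → (Vec d →L[ℝ] Vec d)}
    (hgrad : ∀ x, HasGradientAt f (gradf x) x)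
    (hHf : ∀ x, HasFDerivAt gradf (Hf x) x)
    (hHub : ∀ x (v : Vec d), ⟪Hf x v, v⟫ ≤ L * ‖v‖ ^ 2)
    (x v : Vec d) : f (x + v) ≤ f x + ⟪gradf x, v⟫ + L / 2 * ‖v‖ ^ 2 := by
  set c : ℝ → Vec d := fun t => x + t • v with hc_def
  have hc : ∀ t : ℝ, HasDerivAt c v t := fun t => by
    have := ((hasDerivAt_id t).smul_const v).const_add x
    simp only [one_smul] at this
    exact this
  have hc0 : c 0 = x := by simp [hc_def]
  have hc1 : c 1 = x + v := by simp [hc_def]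
  have hψ : ∀ t : ℝ, HasDerivAt (fun s => ⟪gradf (c s), v⟫) ⟪Hf (c t) v, v⟫ t := by
    intro t
    have h1 : HasDerivAt (fun s => gradf (c s)) (Hf (c t) v) t :=
      (hHf (c t)).comp_hasDerivAt t (hc t)
    simpa using h1.inner ℝ (hasDerivAt_const t v)
  have hφ : ∀ t : ℝ, HasDerivAt (fun s => f (c s)) ⟪gradf (c t), v⟫ t := by
    intro t
    have h1 : HasFDerivAt f (InnerProductSpace.toDual ℝ (Vec d) (gradf (c t))) (c t) :=
      hasGradientAt_iff_hasFDerivAt.mp (hgrad (c t))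
    have := h1.comp_hasDerivAt t (hc t)
    rw [InnerProductSpace.toDual_apply_apply] at this
    exact this
  have hA : ∀ t : ℝ, 0 ≤ t → ⟪gradf (c t), v⟫ ≤ ⟪gradf x, v⟫ + L * t * ‖v‖ ^ 2 := by
    intro t ht
    have hd : ∀ s : ℝ, HasDerivAt (fun u => ⟪gradf (c u), v⟫ - L * u * ‖v‖ ^ 2)
        (⟪Hf (c s) v, v⟫ - L * ‖v‖ ^ 2) s := by
      intro s
      have := (hψ s).sub (((hasDerivAt_id s).const_mul L).mul_const (‖v‖ ^ 2))
      simp only [id, mul_one] at this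
      exact this
    have hanti : Antitone (fun u => ⟪gradf (c u), v⟫ - L * u * ‖v‖ ^ 2) := by
      apply antitone_of_deriv_nonpos (fun s => (hd s).differentiableAt)
      intro s
      rw [(hd s).deriv]
      have := hHub (c s) v
      linarith
    have := hanti ht
    simp only [mul_zero, zero_mul, sub_zero, hc0] at this
    linarith
  have hd2 : ∀ s : ℝ, HasDerivAt
      (fun u => f (c u) - u * ⟪gradf x, v⟫ - L * u ^ 2 / 2 * ‖v‖ ^ 2)
      (⟪gradf (c s), v⟫ - ⟪gradf x, v⟫ - L * s * ‖v‖ ^ 2) s := by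
    intro s
    have h2 : HasDerivAt (fun u : ℝ => L * u ^ 2 / 2 * ‖v‖ ^ 2) (L * s * ‖v‖ ^ 2) s := by
      have hp : HasDerivAt (fun u : ℝ => u ^ 2) (2 * s) s := by
        simpa using hasDerivAt_pow 2 s
      have := ((hp.const_mul L).div_const 2).mul_const (‖v‖ ^ 2)
      rw [show L * s * ‖v‖ ^ 2 = L * (2 * s) / 2 * ‖v‖ ^ 2 by ring]
      exact this
    have := ((hφ s).sub ((hasDerivAt_id s).mul_const ⟪gradf x, v⟫)).sub h2
    simp only [id, one_mul] at this
    exact this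
  have hanti2 : AntitoneOn (fun u => f (c u) - u * ⟪gradf x, v⟫ - L * u ^ 2 / 2 * ‖v‖ ^ 2)
      (Set.Icc (0:ℝ) 1) := by
    apply antitoneOn_of_deriv_nonpos (convex_Icc 0 1)
    · exact Continuous.continuousOn
        (Differentiable.continuous fun s => (hd2 s).differentiableAt)
    · exact fun s _ => (hd2 s).differentiableAt.differentiableWithinAt
    · intro s hs
      rw [interior_Icc] at hs
      rw [(hd2 s).deriv]
      have := hA s hs.1.le
      linarith
  have := hanti2 (Set.mem_Icc.mpr ⟨le_refl 0, zero_le_one⟩)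
    (Set.mem_Icc.mpr ⟨zero_le_one, le_refl 1⟩) zero_le_one
  simp only [hc0, hc1, one_pow, mul_one, one_mul, mul_zero, zero_mul, sub_zero] at this
  linarith

lemma op_facts {d : ℕ} {μt : ℝ} (hμ : 0 < μt) (H : Matrix (Fin d) (Fin d) ℝ)
    (hsym : H.IsSymm)
    (hlb : ∀ v : Vec d, μt * ‖v‖ ^ 2 ≤ ⟪toOp H v, v⟫) :
    (∀ v, toOp H (toOp H⁻¹ v) = v) ∧ (∀ v, toOp H⁻¹ (toOp H v) = v) ∧
      (∀ u v : Vec d, ⟪toOp H⁻¹ u, v⟫ = ⟪u, toOp H⁻¹ v⟫) ∧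
      (∀ u v : Vec d, ⟪toOp H u, v⟫ = ⟪u, toOp H v⟫) := by
  have hdet : IsUnit H.det := by
    rw [isUnit_iff_ne_zero]
    intro h0
    obtain ⟨v, hv, hHv⟩ := (Matrix.exists_mulVec_eq_zero_iff).mpr h0
    set x : Vec d := (WithLp.equiv 2 (Fin d → ℝ)).symm v with hx
    have hHx : toOp H x = 0 := by
      simp [toOp, hx, Matrix.toEuclideanLin_apply, hHv]
    have := hlb x
    rw [hHx] at this
    simp only [inner_zero_left] at this
    have hx0 : x = 0 := by
      have : ‖x‖ ^ 2 ≤ 0 := by nlinarith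
      have : ‖x‖ = 0 := by nlinarith [norm_nonneg x, sq_nonneg ‖x‖]
      exact norm_eq_zero.mp this
    apply hv
    have : (WithLp.equiv 2 (Fin d → ℝ)) x = 0 := by rw [hx0]; rfl
    simpa [hx] using this
  have hBA : ∀ v : Vec d, toOp H (toOp H⁻¹ v) = v := by
    intro v
    simp [toOp, Matrix.toEuclideanLin_apply, Matrix.mulVec_mulVec,
      Matrix.mul_nonsing_inv H hdet, Matrix.one_mulVec]
  have hAB : ∀ v : Vec d, toOp H⁻¹ (toOp H v) = v := by
    intro v
    simp [toOp, Matrix.toEuclideanLin_apply, Matrix.mulVec_mulVec,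
      Matrix.nonsing_inv_mul H hdet, Matrix.one_mulVec]
  refine ⟨hBA, hAB, ?_, ?_⟩
  · have hsym' : (H⁻¹).IsSymm := by
      unfold Matrix.IsSymm
      rw [Matrix.transpose_nonsing_inv, hsym]
    have hherm : (H⁻¹).IsHermitian := by
      rw [Matrix.IsHermitian, Matrix.conjTranspose_eq_transpose_of_trivial]
      exact hsym'
    exact fun u v => Matrix.isHermitian_iff_isSymmetric.mp hherm u v
  · have hherm : H.IsHermitian := by
      rw [Matrix.IsHermitian, Matrix.conjTranspose_eq_transpose_of_trivial]
      exact hsym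
    exact fun u v => Matrix.isHermitian_iff_isSymmetric.mp hherm u v

lemma quad_lb {d : ℕ} {μ Λ : ℝ} (hμ : 0 < μ) (hΛ : 0 < Λ) (T : Vec d →L[ℝ] Vec d)
    (hsym : ∀ a b : Vec d, ⟪T a, b⟫ = ⟪a, T b⟫)
    (hlb : ∀ a : Vec d, μ * ‖a‖ ^ 2 ≤ ⟪T a, a⟫)
    (hub : ∀ a : Vec d, ⟪T a, a⟫ ≤ Λ * ‖a‖ ^ 2)
    (u : Vec d) : ‖T u‖ ^ 2 ≤ Λ * ⟪T u, u⟫ := by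
  set v := T u with hv
  have h0 : 0 ≤ ⟪T (u - Λ⁻¹ • v), u - Λ⁻¹ • v⟫ :=
    le_trans (by positivity) (hlb _)
  have h1 : ⟪T v, u⟫ = ‖v‖ ^ 2 := by
    rw [hsym, ← hv, real_inner_self_eq_norm_sq]
  have h2 : ⟪T u, v⟫ = ‖v‖ ^ 2 := by rw [← hv, real_inner_self_eq_norm_sq]
  have hexp : ⟪T (u - Λ⁻¹ • v), u - Λ⁻¹ • v⟫ =
      ⟪T u, u⟫ - 2 * Λ⁻¹ * ‖v‖ ^ 2 + Λ⁻¹ ^ 2 * ⟪T v, v⟫ := by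
    rw [map_sub, _root_.map_smul, inner_sub_left, inner_sub_right, inner_sub_right,
      inner_smul_left, inner_smul_right, inner_smul_left, inner_smul_right, h1, h2]
    simp only [starRingEnd_apply, star_trivial]
    ring
  rw [hexp] at h0
  have hub' := hub v
  have e1 : Λ⁻¹ ^ 2 * (Λ * ‖v‖ ^ 2) = Λ⁻¹ * ‖v‖ ^ 2 := by
    field_simp
  have h3 : Λ⁻¹ * ‖v‖ ^ 2 ≤ ⟪T u, u⟫ := by
    nlinarith [mul_le_mul_of_nonneg_left hub' (sq_nonneg Λ⁻¹)]
  calc ‖v‖ ^ 2 = Λ * (Λ⁻¹ * ‖v‖ ^ 2) := by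
        field_simp
    _ ≤ Λ * ⟪T u, u⟫ := mul_le_mul_of_nonneg_left h3 hΛ.le

lemma const_eq (Lt αv θ fv fm it T : ℝ) (hα : αv ≠ 0) (hθ : 1 - θ ^ 2 ≠ 0)
    (hT : T ≠ 0) :
    Lt * (((fv - fm) + αv / 2 * it) / (αv * (1 - θ ^ 2) / 2)) / T =
      Lt / ((1 - θ ^ 2) * T) * (2 * (fv - fm) / αv + it) := by
  field_simp

set_option maxHeartbeats 1000000 in
/-- Global sublinear convergence with deterministic adaptive gradient
sampling for nonconvex functions bounded below. -/
theorem global_sublinear_convergence_deterministic {d : ℕ}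
    (L μt Lt α θg fmin ιt : ℝ)
    (hL : 0 < L) (hμt : 0 < μt) (hLt : L ≤ Lt)
    (f : Vec d → ℝ) (gradf : Vec d → Vec d) (Hf : Vec d → (Vec d →L[ℝ] Vec d))
    (hsmooth : ContDiff ℝ 2 f)
    (hgrad : ∀ x, HasGradientAt f (gradf x) x)
    (hHf : ∀ x, HasFDerivAt gradf (Hf x) x)
    (hHub : ∀ x (v : Vec d), ⟪Hf x v, v⟫ ≤ L * ‖v‖ ^ 2)
    (hbdd : ∀ x, fmin ≤ f x)
    (Ht : ℕ → Matrix (Fin d) (Fin d) ℝ)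
    (hHtsym : ∀ k, (Ht k).IsSymm)
    (hHtlb : ∀ k (v : Vec d), μt * ‖v‖ ^ 2 ≤ ⟪toOp (Ht k) v, v⟫)
    (hHtub : ∀ k (v : Vec d), ⟪toOp (Ht k) v, v⟫ ≤ Lt * ‖v‖ ^ 2)
    (w g : ℕ → Vec d) (hα0 : 0 < α) (hα : α ≤ μt / L)
    (hiter : ∀ k, w (k + 1) = w k - α • toOp (Ht k)⁻¹ (g k))
    (hθg : θg ∈ Set.Ico (0 : ℝ) 1)
    (ι : ℕ → ℝ) (hι_pos : ∀ k, 0 < ι k) (hι_sum : HasSum ι ιt)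
    (hnorm : ∀ k, ⟪toOp (Ht k)⁻¹ (g k - gradf (w k)), g k - gradf (w k)⟫ ≤
      θg ^ 2 * ⟪toOp (Ht k)⁻¹ (gradf (w k)), gradf (w k)⟫ + ι k) :
    Tendsto (fun k => ‖gradf (w k)‖ ^ 2) atTop (nhds 0) ∧
    ∀ T : ℕ, ∀ hT : 0 < T,
      (Finset.range T).inf' (Finset.nonempty_range_iff.mpr hT.ne')
          (fun k => ‖gradf (w k)‖ ^ 2) ≤
        Lt / ((1 - θg ^ 2) * T) * (2 * (f (w 0) - fmin) / α + ιt) := by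
  obtain ⟨hθg0, hθg1⟩ := hθg
  have hLt0 : 0 < Lt := lt_of_lt_of_le hL hLt
  have hθ2 : θg ^ 2 < 1 := by nlinarith
  have hαL : L * α ≤ μt := by
    have := (le_div_iff₀ hL).mp hα
    linarith
  have hfacts := fun k => op_facts hμt (Ht k) (hHtsym k) (hHtlb k)
  set A : ℕ → Vec d →L[ℝ] Vec d := fun k => toOp (Ht k)⁻¹ with hA_def
  set B : ℕ → Vec d →L[ℝ] Vec d := fun k => toOp (Ht k) with hB_def
  have hBA : ∀ k v, B k (A k v) = v := fun k => (hfacts k).1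
  have hAsym : ∀ k (u v : Vec d), ⟪A k u, v⟫ = ⟪u, A k v⟫ := fun k => (hfacts k).2.2.1
  have hBsym : ∀ k (u v : Vec d), ⟪B k u, v⟫ = ⟪u, B k v⟫ := fun k => (hfacts k).2.2.2
  have hF2 : ∀ k (v : Vec d), μt * ‖A k v‖ ^ 2 ≤ ⟪A k v, v⟫ := by
    intro k v
    have h : μt * ‖A k v‖ ^ 2 ≤ ⟪B k (A k v), A k v⟫ := hHtlb k (A k v)
    rw [hBA k v] at h
    rwa [real_inner_comm] at h
  have hF1 : ∀ k (v : Vec d), 0 ≤ ⟪A k v, v⟫ := fun k v =>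
    le_trans (by positivity) (hF2 k v)
  have hF3 : ∀ k (v : Vec d), ‖v‖ ^ 2 ≤ Lt * ⟪A k v, v⟫ := by
    intro k v
    have h := quad_lb hμt hLt0 (B k) (hBsym k) (hHtlb k) (hHtub k) (A k v)
    rw [hBA k v] at h
    rwa [real_inner_comm] at h
  set qq : ℕ → ℝ := fun k => ⟪A k (gradf (w k)), gradf (w k)⟫ with hqq_def
  -- one-step descent inequality
  have step : ∀ k, α * (1 - θg ^ 2) / 2 * qq k ≤
      f (w k) - f (w (k + 1)) + α / 2 * ι k := by
    intro k
    show α * (1 - θg ^ 2) / 2 * ⟪A k (gradf (w k)), gradf (w k)⟫ ≤ _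
    have hgk : g k = gradf (w k) + (g k - gradf (w k)) := by abel
    have hw : w (k + 1) = w k + (-α) • A k (g k) := by
      rw [hiter k, sub_eq_add_neg, ← neg_smul]
    have hdes := descent_lemma hgrad hHf hHub (w k) ((-α) • A k (g k))
    rw [← hw] at hdes
    have h1 : ⟪gradf (w k), A k (g k)⟫ = ⟪A k (gradf (w k)), gradf (w k)⟫ +
        ⟪A k (gradf (w k)), g k - gradf (w k)⟫ := by
      conv_lhs => rw [hgk]
      rw [map_add, inner_add_right,
        real_inner_comm (gradf (w k)) (A k (gradf (w k))),
        ← hAsym k (gradf (w k)) (g k - gradf (w k))]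
    have h2 : ⟪A k (g k), g k⟫ = ⟪A k (gradf (w k)), gradf (w k)⟫ +
        2 * ⟪A k (gradf (w k)), g k - gradf (w k)⟫ +
        ⟪A k (g k - gradf (w k)), g k - gradf (w k)⟫ := by
      conv_lhs => rw [hgk]
      rw [map_add, inner_add_left, inner_add_right, inner_add_right]
      have e1 : ⟪A k (g k - gradf (w k)), gradf (w k)⟫ =
          ⟪A k (gradf (w k)), g k - gradf (w k)⟫ := by
        rw [hAsym k (g k - gradf (w k)) (gradf (w k)),
          real_inner_comm (g k - gradf (w k)) (A k (gradf (w k)))]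
      rw [e1]
      ring
    have h3 := hF2 k (g k)
    rw [h2] at h3
    have h4 := hF1 k (g k)
    rw [h2] at h4
    have h5 := hnorm k
    have hq0 := hF1 k (gradf (w k))
    have hdes' : f (w (k + 1)) ≤ f (w k) -
        α * (⟪A k (gradf (w k)), gradf (w k)⟫ + ⟪A k (gradf (w k)), g k - gradf (w k)⟫) +
        L / 2 * (α ^ 2 * ‖A k (g k)‖ ^ 2) := by
      have e2 : ⟪gradf (w k), (-α) • A k (g k)⟫ =
          -α * (⟪A k (gradf (w k)), gradf (w k)⟫ +
            ⟪A k (gradf (w k)), g k - gradf (w k)⟫) := by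
        rw [real_inner_smul_right, h1]
      have e3 : ‖(-α) • A k (g k)‖ ^ 2 = α ^ 2 * ‖A k (g k)‖ ^ 2 := by
        rw [norm_smul, mul_pow, Real.norm_eq_abs, abs_neg, sq_abs]
      rw [e2, e3] at hdes
      linarith
    set q : ℝ := ⟪A k (gradf (w k)), gradf (w k)⟫ with hq
    set cc : ℝ := ⟪A k (gradf (w k)), g k - gradf (w k)⟫ with hcc
    set r : ℝ := ⟪A k (g k - gradf (w k)), g k - gradf (w k)⟫ with hr
    set n : ℝ := ‖A k (g k)‖ ^ 2 with hn
    have key : μt * (α * (1 - θg ^ 2) / 2 * q) ≤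
        μt * (f (w k) - f (w (k + 1)) + α / 2 * ι k) := by
      nlinarith [hdes',
        mul_nonneg (mul_nonneg hL.le (sq_nonneg α)) (sub_nonneg.mpr h3),
        mul_nonneg (mul_nonneg hα0.le (sub_nonneg.mpr hαL)) h4,
        mul_nonneg (mul_nonneg hμt.le hα0.le) (sub_nonneg.mpr h5)]
    exact (mul_le_mul_iff_right₀ hμt).mp key
  -- telescoping
  have hι_le : ∀ T : ℕ, ∑ k ∈ range T, ι k ≤ ιt := fun T =>
    sum_le_hasSum (range T) (fun i _ => (hι_pos i).le) hι_sum
  have hιt0 : 0 ≤ ιt := le_trans (by simp) (hι_le 0)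
  set D : ℝ := (f (w 0) - fmin) + α / 2 * ιt with hD_def
  have hsumq : ∀ T : ℕ, α * (1 - θg ^ 2) / 2 * (∑ k ∈ range T, qq k) ≤ D := by
    intro T
    have t1 : ∑ k ∈ range T, (α * (1 - θg ^ 2) / 2 * qq k) ≤
        ∑ k ∈ range T, (f (w k) - f (w (k + 1)) + α / 2 * ι k) :=
      sum_le_sum fun i _ => step i
    rw [sum_add_distrib, sum_range_sub' (fun k => f (w k)) T, ← mul_sum, ← mul_sum] at t1
    have t2 : α / 2 * ∑ k ∈ range T, ι k ≤ α / 2 * ιt :=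
      mul_le_mul_of_nonneg_left (hι_le T) (by positivity)
    have t3 : fmin ≤ f (w T) := hbdd _
    rw [hD_def]
    linarith
  have hc : (0:ℝ) < α * (1 - θg ^ 2) / 2 := by nlinarith
  have hGle : ∀ k, ‖gradf (w k)‖ ^ 2 ≤ Lt * qq k := fun k => hF3 k (gradf (w k))
  set CC : ℝ := Lt * (D / (α * (1 - θg ^ 2) / 2)) with hCC_def
  have hS : ∀ T : ℕ, ∑ k ∈ range T, ‖gradf (w k)‖ ^ 2 ≤ CC := by
    intro T
    have t1 : ∑ k ∈ range T, ‖gradf (w k)‖ ^ 2 ≤ Lt * ∑ k ∈ range T, qq k := by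
      rw [mul_sum]
      exact sum_le_sum fun i _ => hGle i
    have t2 : ∑ k ∈ range T, qq k ≤ D / (α * (1 - θg ^ 2) / 2) := by
      rw [le_div_iff₀ hc]
      have := hsumq T
      linarith
    calc ∑ k ∈ range T, ‖gradf (w k)‖ ^ 2 ≤ Lt * ∑ k ∈ range T, qq k := t1
      _ ≤ CC := mul_le_mul_of_nonneg_left t2 hLt0.le
  constructor
  · have hsummable : Summable (fun k => ‖gradf (w k)‖ ^ 2) :=
      summable_of_sum_range_le (fun k => by positivity) hS
    exact hsummable.tendsto_atTop_zero
  · intro T hT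
    have hne := Finset.nonempty_range_iff.mpr hT.ne'
    have hTpos : (0:ℝ) < (T:ℝ) := by exact_mod_cast hT
    have hmin : (T:ℝ) * (range T).inf' hne (fun k => ‖gradf (w k)‖ ^ 2) ≤
        ∑ k ∈ range T, ‖gradf (w k)‖ ^ 2 := by
      have := Finset.card_nsmul_le_sum (range T) (fun k => ‖gradf (w k)‖ ^ 2)
        ((range T).inf' hne (fun k => ‖gradf (w k)‖ ^ 2))
        (fun i hi => Finset.inf'_le _ hi)
      rwa [card_range, nsmul_eq_mul] at this
    have hfin : (range T).inf' hne (fun k => ‖gradf (w k)‖ ^ 2) ≤ CC / T := by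
      rw [le_div_iff₀ hTpos]
      calc (range T).inf' hne (fun k => ‖gradf (w k)‖ ^ 2) * T
          = T * (range T).inf' hne (fun k => ‖gradf (w k)‖ ^ 2) := by ring
        _ ≤ ∑ k ∈ range T, ‖gradf (w k)‖ ^ 2 := hmin
        _ ≤ CC := hS T
    have heq : CC / T = Lt / ((1 - θg ^ 2) * T) * (2 * (f (w 0) - fmin) / α + ιt) := by
      rw [hCC_def, hD_def]
      exact const_eq Lt α θg (f (w 0)) fmin ιt T hα0.ne' (by linarith) hTpos.ne'
    rwa [heq] at hfin
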